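/- Szemerédi's theorem implies that the Erdős set E has Hausdorff dimension 0. More precisely, assuming that every subset of ℕ with positive upper natural density contains arbitrarily long arithmetic progressions, each set F_i (i ≥ 3) has upper box dimension 0, and hence dim_H E = 0. -/

import Mathlib

open Filter MeasureTheory Set
open scoped ENNReal

/-- The `n`-th binary digit of `x ∈ [0,1)` (dyadic rationals get the
terminating expansion, i.e. the one with finitely many `1`'s). -/
noncomputable def digit (x : ℝ) (n : ℕ) : ℕ := (⌊x * 2 ^ n⌋).toNat % 2

/-- Positions of digit `1` in the binary expansion of `x`. -/
def onesOf (x : ℝ) : Set ℕ := {n : ℕ | digit x n = 1}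

/-- `A` contains an `m`-term arithmetic progression. -/
def HasAP (A : Set ℕ) (m : ℕ) : Prop :=
  ∃ a d : ℕ, 1 ≤ d ∧ ∀ t < m, a + t * d ∈ A

/-- `F i`: numbers in `[0,1)` whose binary expansion contains no `i`-term
arithmetic progression of positions of digit `1`. -/
noncomputable def F (i : ℕ) : Set ℝ :=
  {x ∈ Set.Ico (0 : ℝ) 1 | ¬ HasAP (onesOf x) i}

/-- The Erdős set. -/
noncomputable def E : Set ℝ := ⋃ i, ⋃ (_ : 3 ≤ i), F i

/-- Minimal number of closed balls of radius `r` needed to cover `A`. -/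
noncomputable def covN (A : Set ℝ) (r : ℝ) : ℕ∞ :=
  ⨅ (t : Finset ℝ) (_ : A ⊆ ⋃ x ∈ t, Metric.closedBall x r), (t.card : ℕ∞)

/-- Upper box dimension, computed along scales `2⁻¹ ^ N`. -/
noncomputable def ubox (A : Set ℝ) : ℝ≥0∞ :=
  Filter.limsup (fun N : ℕ =>
    if covN A ((2 : ℝ)⁻¹ ^ N) = ⊤ then (⊤ : ℝ≥0∞)
    else ENNReal.ofReal (Real.logb 2 ((covN A ((2 : ℝ)⁻¹ ^ N)).toNat) / N)) Filter.atTop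

/-- Upper natural density of a set of naturals. -/
noncomputable def upperDensity (A : Set ℕ) : ℝ :=
  Filter.limsup (fun n : ℕ => ((A ∩ Set.Icc 1 n).ncard : ℝ) / n) Filter.atTop

lemma hasAP_mono {A B : Set ℕ} (h : A ⊆ B) {m : ℕ} (hA : HasAP A m) : HasAP B m := by
  obtain ⟨a, d, hd, ht⟩ := hA
  exact ⟨a, d, hd, fun t htm => h (ht t htm)⟩

lemma finSz (szemeredi : ∀ A : Set ℕ, 0 < upperDensity A → ∀ k : ℕ, HasAP A k)
    {i : ℕ} (hi : 3 ≤ i) {ε : ℝ} (hε : 0 < ε) :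
    ∃ N₀ : ℕ, ∀ N, N₀ ≤ N → ∀ S : Finset ℕ, (∀ n ∈ S, n < N) → ¬ HasAP ↑S i →
      (S.card : ℝ) < ε * N := by
  by_contra hcon
  push_neg at hcon
  have hch : ∀ b : ℕ, ∃ p : ℕ × Finset ℕ, b ≤ p.1 ∧ (∀ n ∈ p.2, n < p.1) ∧
      ¬ HasAP ↑p.2 i ∧ ε * p.1 ≤ p.2.card := by
    intro b
    obtain ⟨N, hN, S, h1, h2, h3⟩ := hcon b
    exact ⟨(N, S), hN, h1, h2, h3⟩
  choose pick hpick1 hpick2 hpick3 hpick4 using hch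
  -- end of block k
  set e : ℕ → ℕ := fun k => Nat.rec 0 (fun _ prev => prev + 2 * (pick (prev + 1)).1 + 1) k
    with he_def
  set Nb : ℕ → ℕ := fun k => (pick (e k + 1)).1 with hNb_def
  set Sb : ℕ → Finset ℕ := fun k => (pick (e k + 1)).2 with hSb_def
  set Mb : ℕ → ℕ := fun k => e k + Nb k + 1 with hMb_def
  have he : ∀ k, e (k + 1) = e k + 2 * Nb k + 1 := fun k => rfl
  have hN1 : ∀ k, e k + 1 ≤ Nb k := fun k => hpick1 (e k + 1)
  have hSlt : ∀ k, ∀ n ∈ Sb k, n < Nb k := fun k => hpick2 (e k + 1)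
  have hSno : ∀ k, ¬ HasAP ↑(Sb k) i := fun k => hpick3 (e k + 1)
  have hScard : ∀ k, ε * Nb k ≤ (Sb k).card := fun k => hpick4 (e k + 1)
  have hemono : StrictMono e := by
    apply strictMono_nat_of_lt_succ
    intro k
    rw [he k]
    omega
  -- the set A
  set A : Set ℕ := ⋃ k, (fun s => Mb k + s) '' ↑(Sb k) with hA_def
  have hrange : ∀ k x, x ∈ (fun s => Mb k + s) '' ↑(Sb k) → e k + Nb k + 1 ≤ x ∧ x < e (k + 1) := by
    intro k x hx
    obtain ⟨s, hs, rfl⟩ := hx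
    have := hSlt k s hs
    constructor
    · simp [hMb_def]
    · rw [he k]; simp only [hMb_def]; omega
  -- density bound
  have hdens : (0:ℝ) < upperDensity A := by
    have key : ∀ k : ℕ, ε / 3 ≤ ((A ∩ Set.Icc 1 (e (k + 1))).ncard : ℝ) / (e (k + 1)) := by
      intro k
      set n := e (k + 1) with hn
      have hsub : (fun s => Mb k + s) '' ↑(Sb k) ⊆ A ∩ Set.Icc 1 n := by
        intro x hx
        refine ⟨Set.mem_iUnion.mpr ⟨k, hx⟩, ?_⟩
        obtain ⟨h1, h2⟩ := hrange k x hx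
        exact ⟨by omega, by omega⟩
      have hfin2 : (A ∩ Set.Icc 1 n).Finite :=
        (Set.finite_Icc 1 n).subset Set.inter_subset_right
      have hcard1 : (Sb k).card ≤ (A ∩ Set.Icc 1 n).ncard := by
        calc (Sb k).card = ((fun s => Mb k + s) '' ↑(Sb k)).ncard := by
              rw [Set.ncard_image_of_injective _ (add_right_injective (Mb k)),
                Set.ncard_coe_finset]
        _ ≤ _ := Set.ncard_le_ncard hsub hfin2
      have hek : n = e k + 2 * Nb k + 1 := he k
      have hNk := hN1 k
      have hc := hScard k
      have hn3 : n ≤ 3 * Nb k := by omega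
      have hn1 : 1 ≤ n := by omega
      have hn0 : (0:ℝ) < (n:ℝ) := by exact_mod_cast hn1
      rw [div_le_div_iff₀ (by norm_num) hn0]
      have c1 : (n : ℝ) ≤ 3 * (Nb k : ℝ) := by exact_mod_cast hn3
      have c2 : ((Sb k).card : ℝ) ≤ ((A ∩ Set.Icc 1 n).ncard : ℝ) := by exact_mod_cast hcard1
      nlinarith [hε.le]
    have hfreq : ∃ᶠ n in atTop, ε / 3 ≤ ((A ∩ Set.Icc 1 n).ncard : ℝ) / n := by
      rw [Filter.frequently_atTop]
      intro m
      refine ⟨e (m + 1), ?_, key m⟩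
      calc m ≤ m + 1 := Nat.le_succ m
      _ ≤ e (m + 1) := hemono.le_apply
    have hbdd : Filter.IsBoundedUnder (· ≤ ·) atTop
        (fun n : ℕ => ((A ∩ Set.Icc 1 n).ncard : ℝ) / n) := by
      refine Filter.isBoundedUnder_of ⟨1, fun n => ?_⟩
      rcases Nat.eq_zero_or_pos n with rfl | hn
      · simp
      · have h1 : (A ∩ Set.Icc 1 n).ncard ≤ n := by
          calc (A ∩ Set.Icc 1 n).ncard ≤ (Set.Icc 1 n).ncard :=
                Set.ncard_le_ncard Set.inter_subset_right (Set.finite_Icc 1 n)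
          _ = n := by
              rw [← Finset.coe_Icc, Set.ncard_coe_finset, Nat.card_Icc]; omega
        apply div_le_one_of_le₀
        · exact_mod_cast h1
        · positivity
    have hle := Filter.le_limsup_of_frequently_le hfreq hbdd
    calc (0:ℝ) < ε / 3 := by positivity
    _ ≤ _ := hle
  obtain ⟨a, d, hd, hmem⟩ := szemeredi A hdens i
  -- each term lies in some block
  have hblk : ∀ t, t < i → ∃ k s, s ∈ Sb k ∧ a + t * d = Mb k + s := by
    intro t ht
    obtain ⟨_, ⟨k, rfl⟩, s, hs, hx⟩ := hmem t ht
    exact ⟨k, s, hs, hx.symm⟩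
  choose kf sf hsf hxf using hblk
  have hbnd : ∀ t (ht : t < i), e (kf t ht) + Nb (kf t ht) + 1 ≤ a + t * d ∧
      a + t * d < e (kf t ht + 1) :=
    fun t ht => hrange _ _ ⟨sf t ht, hsf t ht, (hxf t ht).symm⟩
  have hemon := hemono.monotone
  have h1i : 1 < i := by omega
  have h2i : 2 < i := by omega
  have h0i : 0 < i := by omega
  -- consecutive terms (t ≥ 1) lie in the same block
  have consec : ∀ t (h1 : 1 ≤ t) (ht : t + 1 < i),
      kf (t + 1) ht = kf t (by omega) := by
    intro t h1 ht
    set k1 := kf t (by omega : t < i) with hk1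
    set k2 := kf (t + 1) ht with hk2
    obtain ⟨hx1, hx2⟩ := hbnd t (by omega)
    obtain ⟨hy1, hy2⟩ := hbnd (t + 1) ht
    rw [← hk1] at hx1 hx2
    rw [← hk2] at hy1 hy2
    have hxy : a + (t + 1) * d = (a + t * d) + d := by ring
    have hd1 : 1 ≤ d := hd
    have hxlty : a + t * d < a + (t + 1) * d := by omega
    have hk12 : k1 ≤ k2 := by
      by_contra hlt
      push_neg at hlt
      have : e (k2 + 1) ≤ e k1 := hemon hlt
      omega
    rcases eq_or_lt_of_le hk12 with heq | hlt
    · rw [heq]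
    · exfalso
      have h1' : e (k1 + 1) ≤ e k2 := hemon hlt
      have h2' : e k2 + 1 ≤ Nb k2 := hN1 k2
      have h3' : d ≤ a + t * d := by
        calc d = 1 * d := (one_mul d).symm
        _ ≤ t * d := Nat.mul_le_mul_right d h1
        _ ≤ a + t * d := Nat.le_add_left _ a
      omega
  -- all terms with 1 ≤ t < i lie in block K
  set K := kf 1 h1i with hK
  have hallk : ∀ t (h1 : 1 ≤ t) (ht : t < i), kf t ht = K := by
    intro t
    induction t with
    | zero => omega
    | succ n ih =>
      intro h1 ht
      rcases Nat.eq_or_lt_of_le h1 with h | h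
      · simp only [← h]; rfl
      · have hn1 : 1 ≤ n := by omega
        rw [consec n hn1 ht]
        exact ih hn1 (by omega)
  -- d is at most Nb K - 1
  obtain ⟨ha1, ha2⟩ := hbnd 1 h1i
  obtain ⟨hb1, hb2⟩ := hbnd 2 h2i
  rw [hallk 2 (by omega) h2i] at hb1 hb2
  rw [← hK] at ha1 ha2
  have heK : e (K + 1) = e K + 2 * Nb K + 1 := he K
  have hdK : d ≤ Nb K - 1 := by omega
  -- the first term also lies in block K
  obtain ⟨hc1, hc2⟩ := hbnd 0 h0i
  have hk0 : kf 0 h0i = K := by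
    rcases lt_trichotomy (kf 0 h0i) K with hlt | heq | hgt
    · exfalso
      have : e (kf 0 h0i + 1) ≤ e K := hemon hlt
      have hNK : e K + 1 ≤ Nb K := hN1 K
      simp only [Nat.mul_zero, Nat.add_zero, Nat.zero_mul] at hc1 hc2
      omega
    · exact heq
    · exfalso
      have : e (K + 1) ≤ e (kf 0 h0i) := hemon hgt
      simp only [Nat.zero_mul, Nat.add_zero] at hc1 hc2
      have hNK : e K + 1 ≤ Nb K := hN1 K
      omega
  -- build an AP inside Sb K
  apply hSno K
  have haM : Mb K ≤ a := by
    have := hxf 0 h0i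
    rw [hk0] at this
    simp only [Nat.zero_mul, Nat.add_zero] at this
    omega
  refine ⟨a - Mb K, d, hd, fun t ht => ?_⟩
  have hkt : kf t ht = K := by
    rcases Nat.eq_zero_or_pos t with rfl | hpos
    · exact hk0
    · exact hallk t hpos ht
  have hx := hxf t ht
  rw [hkt] at hx
  have : a - Mb K + t * d = sf t ht := by omega
  rw [this]
  have hmem' := hsf t ht
  rw [hkt] at hmem'
  exact hmem'
open scoped Classical in
noncomputable def goodK (i N : ℕ) : Finset ℕ :=
  (Finset.range (2 ^ N)).filter
    (fun k => ¬ HasAP {n : ℕ | n < N ∧ (k / 2 ^ (N - n)) % 2 = 1} i)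

lemma F_subset_cover (i N : ℕ) :
    F i ⊆ ⋃ k ∈ goodK i N, Set.Icc ((k : ℝ) / 2 ^ N) ((k + 1) / 2 ^ N) := by
  intro x hx
  obtain ⟨⟨hx0, hx1⟩, hnoap⟩ := hx
  set k := ⌊x * 2 ^ N⌋₊ with hk
  have h2N : (0:ℝ) < 2 ^ N := by positivity
  have hxk : (k : ℝ) ≤ x * 2 ^ N := Nat.floor_le (by positivity)
  have hxk2 : x * 2 ^ N < (k : ℝ) + 1 := Nat.lt_floor_add_one _
  have hklt : k < 2 ^ N := by
    rw [hk]
    have h1 : x * 2 ^ N < ((2 ^ N : ℕ) : ℝ) := by push_cast; nlinarith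
    exact (Nat.floor_lt (by positivity)).mpr h1
  have hdig : ∀ n, n < N → digit x n = (k / 2 ^ (N - n)) % 2 := by
    intro n hn
    have h2 : x * 2 ^ n = (x * 2 ^ N) / ((2 ^ (N - n) : ℕ) : ℝ) := by
      have hpow : (2:ℝ) ^ n * (2:ℝ) ^ (N - n) = 2 ^ N := by
        rw [← pow_add]; congr 1; omega
      push_cast
      rw [eq_div_iff (by positivity), mul_assoc, hpow]
    unfold digit
    rw [Int.floor_toNat, h2, Nat.floor_div_natCast]
  have hmemg : k ∈ goodK i N := by
    classical
    simp only [goodK, Finset.mem_filter]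
    refine ⟨Finset.mem_range.mpr hklt, fun h => hnoap (hasAP_mono ?_ h)⟩
    rintro n ⟨hn, hb⟩
    show digit x n = 1
    rw [hdig n hn]
    exact hb
  have hmemI : x ∈ Set.Icc ((k : ℝ) / 2 ^ N) ((k + 1) / 2 ^ N) := by
    constructor
    · rw [div_le_iff₀ h2N]; exact hxk
    · rw [le_div_iff₀ h2N]; exact hxk2.le
  exact Set.mem_biUnion hmemg hmemI
lemma card_goodK_le (i N m : ℕ)
    (hcard : ∀ k ∈ goodK i N,
      ((Finset.range N).filter (fun n => (k / 2 ^ (N - n)) % 2 = 1)).card ≤ m) :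
    (goodK i N).card ≤ 2 * ∑ j ∈ Finset.range (m + 1), N.choose j := by
  classical
  set Sf : ℕ → Finset ℕ := fun k => (Finset.range N).filter (fun n => (k / 2 ^ (N - n)) % 2 = 1)
    with hSf
  set T : Finset (ℕ × Finset ℕ) :=
    ({0, 1} : Finset ℕ) ×ˢ ((Finset.range (m + 1)).biUnion
      (fun j => Finset.powersetCard j (Finset.range N))) with hT
  have hmaps : ∀ k ∈ goodK i N, (k % 2, Sf k) ∈ T := by
    intro k hk
    rw [hT, Finset.mem_product]
    constructor
    · have := Nat.mod_two_eq_zero_or_one k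
      simp only [Finset.mem_insert, Finset.mem_singleton]
      omega
    · rw [Finset.mem_biUnion]
      refine ⟨(Sf k).card, Finset.mem_range.mpr (Nat.lt_succ_of_le (hcard k hk)), ?_⟩
      rw [Finset.mem_powersetCard]
      exact ⟨Finset.filter_subset _ _, rfl⟩
  have hinj : Set.InjOn (fun k => (k % 2, Sf k)) ↑(goodK i N) := by
    intro k hk k' hk' heq
    simp only [Prod.mk.injEq] at heq
    obtain ⟨h0, hSeq⟩ := heq
    have hklt : k < 2 ^ N := Finset.mem_range.mp (Finset.mem_filter.mp hk).1
    have hklt' : k' < 2 ^ N := Finset.mem_range.mp (Finset.mem_filter.mp hk').1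
    apply Nat.eq_of_testBit_eq
    intro j
    rcases Nat.eq_zero_or_pos j with rfl | hj0
    · rw [Nat.testBit_eq_decide_div_mod_eq, Nat.testBit_eq_decide_div_mod_eq]
      simp only [pow_zero, Nat.div_one]
      rw [h0]
    · by_cases hjN : j ≤ N
      · have hn : N - j < N := by omega
        have hmem : (N - j ∈ Sf k) = (N - j ∈ Sf k') := by rw [hSeq]
        simp only [hSf, Finset.mem_filter, Finset.mem_range, hn, true_and] at hmem
        have hNNj : N - (N - j) = j := by omega
        rw [hNNj] at hmem
        rw [Nat.testBit_eq_decide_div_mod_eq, Nat.testBit_eq_decide_div_mod_eq]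
        exact decide_eq_decide.mpr (by rw [hmem])
      · rw [Nat.testBit_eq_false_of_lt (lt_of_lt_of_le hklt (Nat.pow_le_pow_right (by norm_num) (by omega))),
          Nat.testBit_eq_false_of_lt (lt_of_lt_of_le hklt' (Nat.pow_le_pow_right (by norm_num) (by omega)))]
  calc (goodK i N).card ≤ T.card := Finset.card_le_card_of_injOn _ hmaps hinj
  _ ≤ 2 * ∑ j ∈ Finset.range (m + 1), N.choose j := by
      rw [hT, Finset.card_product]
      have h2 : ({0, 1} : Finset ℕ).card ≤ 2 := by norm_num [Finset.card_insert_of_notMem]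
      calc _ ≤ 2 * ((Finset.range (m + 1)).biUnion
            (fun j => Finset.powersetCard j (Finset.range N))).card :=
            Nat.mul_le_mul_right _ h2
      _ ≤ 2 * ∑ j ∈ Finset.range (m + 1), N.choose j := by
          apply Nat.mul_le_mul_left
          calc _ ≤ ∑ j ∈ Finset.range (m + 1), (Finset.powersetCard j (Finset.range N)).card :=
              Finset.card_biUnion_le
          _ = _ := by simp [Finset.card_powersetCard]
lemma sum_choose_le {ε : ℝ} (hε : 0 < ε) (hε2 : ε ≤ 1 / 2) {N m : ℕ} (hm : m ≤ N) :
    (∑ j ∈ Finset.range (m + 1), (N.choose j : ℝ)) ≤ (ε ^ m)⁻¹ * ((1 - ε) ^ (N - m))⁻¹ := by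
  have h1 : (0:ℝ) < 1 - ε := by linarith
  have hp : (0:ℝ) < ε ^ m * (1 - ε) ^ (N - m) := by positivity
  rw [← mul_inv, ← one_div, le_div_iff₀ hp, Finset.sum_mul]
  calc (∑ j ∈ Finset.range (m + 1), (N.choose j : ℝ) * (ε ^ m * (1 - ε) ^ (N - m)))
      ≤ ∑ j ∈ Finset.range (m + 1), ε ^ j * (1 - ε) ^ (N - j) * (N.choose j : ℝ) := by
        apply Finset.sum_le_sum
        intro j hj
        have hjm : j ≤ m := Nat.lt_succ_iff.mp (Finset.mem_range.mp hj)
        rw [mul_comm (ε ^ j * (1 - ε) ^ (N - j)) _]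
        apply mul_le_mul_of_nonneg_left _ (Nat.cast_nonneg _)
        have e1 : ε ^ m = ε ^ j * ε ^ (m - j) := by rw [← pow_add]; congr 1; omega
        have e2 : (1 - ε) ^ (N - j) = (1 - ε) ^ (N - m) * (1 - ε) ^ (m - j) := by
          rw [← pow_add]; congr 1; omega
        rw [e1, e2]
        have e3 : ε ^ (m - j) ≤ (1 - ε) ^ (m - j) :=
          pow_le_pow_left₀ hε.le (by linarith) _
        calc ε ^ j * ε ^ (m - j) * (1 - ε) ^ (N - m)
            ≤ ε ^ j * (1 - ε) ^ (m - j) * (1 - ε) ^ (N - m) := by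
              apply mul_le_mul_of_nonneg_right _ (by positivity)
              exact mul_le_mul_of_nonneg_left e3 (by positivity)
        _ = ε ^ j * ((1 - ε) ^ (N - m) * (1 - ε) ^ (m - j)) := by ring
  _ ≤ ∑ j ∈ Finset.range (N + 1), ε ^ j * (1 - ε) ^ (N - j) * (N.choose j : ℝ) := by
        apply Finset.sum_le_sum_of_subset_of_nonneg
        · exact Finset.range_subset_range.mpr (by omega)
        · intro j _ _
          positivity
  _ = (ε + (1 - ε)) ^ N := (add_pow ε (1 - ε) N).symm
  _ = 1 := by norm_num
lemma sq_le_two_pow {j : ℕ} (hj : 4 ≤ j) : j ^ 2 ≤ 2 ^ j := by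
  induction j with
  | zero => omega
  | succ n ih =>
    rcases Nat.lt_or_ge n 4 with h | h
    · have hn3 : n = 3 := by omega
      subst hn3
      norm_num
    · have h1 := ih (by omega)
      have h2 : (n + 1) ^ 2 ≤ 2 * n ^ 2 := by nlinarith
      calc (n + 1) ^ 2 ≤ 2 * n ^ 2 := h2
      _ ≤ 2 * 2 ^ n := by omega
      _ = 2 ^ (n + 1) := by ring

lemma inv_one_sub_le {ε : ℝ} (hε : 0 < ε) (hε2 : ε ≤ 1 / 2) :
    (1 - ε)⁻¹ ≤ (2 : ℝ) ^ (4 * ε) := by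
  have h1 : (0:ℝ) < 1 - ε := by linarith
  rw [← Real.log_le_log_iff (by positivity) (Real.rpow_pos_of_pos two_pos _),
    Real.log_rpow two_pos]
  have h2 := Real.log_le_sub_one_of_pos (inv_pos.mpr h1)
  have h3 : (1 - ε)⁻¹ - 1 ≤ 2 * ε := by
    have he : (1 - ε)⁻¹ - 1 = ε / (1 - ε) := by field_simp; ring
    rw [he, div_le_iff₀ h1]
    nlinarith
  have h4 := Real.log_two_gt_d9
  nlinarith

set_option maxHeartbeats 1000000 in
lemma goodK_card_le_rpow
    (szemeredi : ∀ A : Set ℕ, 0 < upperDensity A → ∀ k : ℕ, HasAP A k)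
    {i : ℕ} (hi : 3 ≤ i) {δ : ℝ} (hδ : 0 < δ) :
    ∃ N₀ : ℕ, ∀ N, N₀ ≤ N → ((goodK i N).card : ℝ) ≤ (2 : ℝ) ^ (δ * N) := by
  classical
  obtain ⟨j, hj4, hjδ⟩ : ∃ j : ℕ, 4 ≤ j ∧ 12 / δ ≤ (j : ℝ) :=
    ⟨max 4 ⌈12 / δ⌉₊, le_max_left _ _,
      le_trans (Nat.le_ceil _) (by exact_mod_cast le_max_right 4 ⌈12 / δ⌉₊)⟩
  have hjpos : (0:ℝ) < (j : ℝ) := by positivity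
  have h2j : (2:ℝ) ≤ 2 ^ j := by
    calc (2:ℝ) = 2 ^ 1 := (pow_one 2).symm
    _ ≤ 2 ^ j := pow_le_pow_right₀ one_le_two (by omega)
  set ε : ℝ := ((2:ℝ) ^ j)⁻¹ with hεdef
  have hε : 0 < ε := by positivity
  have hε2 : ε ≤ 1 / 2 := by
    rw [hεdef, one_div]
    exact inv_anti₀ two_pos h2j
  have hε1 : ε ≤ 1 := by linarith
  obtain ⟨N₀, hN₀⟩ := finSz szemeredi hi hε
  refine ⟨N₀ + ⌈3 / δ⌉₊ + 1, fun N hN => ?_⟩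
  have hN3δ : (3:ℝ) / δ ≤ N := by
    calc (3:ℝ) / δ ≤ (⌈3 / δ⌉₊ : ℝ) := Nat.le_ceil _
    _ ≤ N := by exact_mod_cast by omega
  have hNpos : (0:ℝ) < N := by
    have : 1 ≤ N := by omega
    exact_mod_cast this
  set m : ℕ := ⌊ε * N⌋₊ with hmdef
  have hmR : (m : ℝ) ≤ ε * N := Nat.floor_le (by positivity)
  have hmN : m ≤ N := by
    have : ε * N ≤ (N:ℝ) := by nlinarith
    calc m ≤ ⌊(N:ℝ)⌋₊ := Nat.floor_le_floor (by linarith)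
    _ = N := Nat.floor_natCast N
  -- every good k has few one-bits
  have hfew : ∀ k ∈ goodK i N,
      ((Finset.range N).filter (fun n => (k / 2 ^ (N - n)) % 2 = 1)).card ≤ m := by
    intro k hk
    simp only [goodK, Finset.mem_filter, Finset.mem_range] at hk
    obtain ⟨hklt, hkno⟩ := hk
    set S := (Finset.range N).filter (fun n => (k / 2 ^ (N - n)) % 2 = 1) with hSdef
    have hsub : (↑S : Set ℕ) ⊆ {n : ℕ | n < N ∧ (k / 2 ^ (N - n)) % 2 = 1} := by
      intro n hn
      rw [hSdef] at hn
      simp only [Finset.coe_filter, Finset.mem_range, Set.mem_setOf_eq] at hn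
      exact hn
    have hnoS : ¬ HasAP ↑S i := fun h => hkno (hasAP_mono hsub h)
    have hlt : ∀ n ∈ S, n < N := by
      intro n hn
      rw [hSdef] at hn
      exact Finset.mem_range.mp (Finset.mem_filter.mp hn).1
    have := hN₀ N (by omega) S hlt hnoS
    exact Nat.le_floor this.le
  have h2S := card_goodK_le i N m hfew
  have h3S := sum_choose_le hε hε2 hmN
  -- three rpow bounds
  have hNδ3 : (1:ℝ) ≤ δ * N / 3 := by
    rw [le_div_iff₀ (by norm_num : (0:ℝ) < 3), one_mul]
    rw [div_le_iff₀ hδ] at hN3δ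
    linarith
  have key0 : (2:ℝ) ≤ 2 ^ (δ * N / 3) := by
    calc (2:ℝ) = 2 ^ (1:ℝ) := (Real.rpow_one 2).symm
    _ ≤ _ := Real.rpow_le_rpow_of_exponent_le one_le_two hNδ3
  have hjer : ((j:ℝ)^2) ≤ 2 ^ j := by exact_mod_cast sq_le_two_pow hj4
  have key1 : ((ε ^ m)⁻¹ : ℝ) ≤ 2 ^ (δ * N / 3) := by
    have he1 : (ε ^ m)⁻¹ = (2:ℝ) ^ ((j * m : ℕ) : ℝ) := by
      rw [hεdef, ← inv_pow, inv_inv, ← pow_mul, Real.rpow_natCast]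
    rw [he1]
    apply Real.rpow_le_rpow_of_exponent_le one_le_two
    have c1 : ((j * m : ℕ) : ℝ) ≤ (j:ℝ) * (ε * N) := by
      push_cast
      exact mul_le_mul_of_nonneg_left hmR hjpos.le
    have c2 : (j:ℝ) * (ε * N) ≤ (N:ℝ) / j := by
      have he2 : (j:ℝ) * (ε * N) = ((j:ℝ) * N) / 2 ^ j := by
        rw [hεdef]; ring
      rw [he2, div_le_div_iff₀ (by positivity) hjpos]
      nlinarith [hjer, hNpos.le]
    have c3 : (N:ℝ) / j ≤ δ * N / 3 := by
      rw [div_le_div_iff₀ hjpos (by norm_num : (0:ℝ) < 3)]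
      have : (12:ℝ) ≤ δ * j := by
        rw [div_le_iff₀ hδ] at hjδ
        linarith
      nlinarith
    linarith
  have key2 : (((1 - ε) ^ (N - m))⁻¹ : ℝ) ≤ 2 ^ (δ * N / 3) := by
    have h1 : (0:ℝ) < 1 - ε := by linarith
    rw [← inv_pow]
    have c1 : ((1 - ε)⁻¹) ^ (N - m) ≤ ((2:ℝ) ^ (4 * ε)) ^ (N - m) :=
      pow_le_pow_left₀ (by positivity) (inv_one_sub_le hε hε2) _
    have c2 : ((2:ℝ) ^ (4 * ε)) ^ (N - m) = 2 ^ (4 * ε * ((N - m : ℕ) : ℝ)) := by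
      rw [← Real.rpow_natCast ((2:ℝ) ^ (4 * ε)) (N - m), ← Real.rpow_mul (by norm_num)]
    have c3 : 4 * ε * ((N - m : ℕ) : ℝ) ≤ δ * N / 3 := by
      have d1 : ((N - m : ℕ) : ℝ) ≤ N := by exact_mod_cast Nat.sub_le N m
      have d2 : 4 * ε ≤ δ / 3 := by
        have e1 : (j:ℝ) ≤ 2 ^ j := by
          exact_mod_cast (Nat.lt_two_pow_self (n := j)).le
        have e2 : ε ≤ 1 / j := by
          rw [hεdef, one_div]
          exact inv_anti₀ hjpos e1
        have e3 : (12:ℝ) ≤ δ * j := by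
          rw [div_le_iff₀ hδ] at hjδ
          linarith
        rw [le_div_iff₀ (by norm_num : (0:ℝ) < 3)]
        calc 4 * ε * 3 = 12 * ε := by ring
        _ ≤ 12 * (1 / j) := by linarith [e2]
        _ ≤ δ := by
            rw [mul_one_div, div_le_iff₀ hjpos]
            linarith
      calc 4 * ε * ((N - m : ℕ) : ℝ) ≤ 4 * ε * N := by
            apply mul_le_mul_of_nonneg_left d1 (by positivity)
      _ = (4 * ε) * N := by ring
      _ ≤ (δ / 3) * N := mul_le_mul_of_nonneg_right d2 hNpos.le
      _ = δ * N / 3 := by ring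
    calc ((1 - ε)⁻¹) ^ (N - m) ≤ 2 ^ (4 * ε * ((N - m : ℕ) : ℝ)) := by rw [← c2]; exact c1
    _ ≤ _ := Real.rpow_le_rpow_of_exponent_le one_le_two c3
  -- final chain
  have hsum_pos : (0:ℝ) ≤ ∑ jj ∈ Finset.range (m + 1), (N.choose jj : ℝ) :=
    Finset.sum_nonneg fun _ _ => Nat.cast_nonneg _
  calc ((goodK i N).card : ℝ)
      ≤ 2 * ∑ jj ∈ Finset.range (m + 1), (N.choose jj : ℝ) := by
        have := h2S
        push_cast
        exact_mod_cast this
  _ ≤ 2 * ((ε ^ m)⁻¹ * ((1 - ε) ^ (N - m))⁻¹) := by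
        apply mul_le_mul_of_nonneg_left h3S (by norm_num)
  _ ≤ (2 ^ (δ * N / 3)) * ((2 ^ (δ * N / 3)) * (2 ^ (δ * N / 3))) := by
        have h1ε : (0:ℝ) < 1 - ε := by linarith
        have p1 : (0:ℝ) ≤ (ε ^ m)⁻¹ := inv_nonneg.mpr (pow_nonneg hε.le m)
        have p2 : (0:ℝ) ≤ ((1 - ε) ^ (N - m))⁻¹ := inv_nonneg.mpr (pow_nonneg h1ε.le _)
        apply mul_le_mul key0 _ (mul_nonneg p1 p2) (by positivity)
        apply mul_le_mul key1 key2 p2 (by positivity)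
  _ = 2 ^ (δ * N) := by
        rw [← Real.rpow_add two_pos, ← Real.rpow_add two_pos]
        congr 1
        ring
lemma covN_le_card (i N : ℕ) : covN (F i) ((2:ℝ)⁻¹ ^ N) ≤ ((goodK i N).card : ℕ∞) := by
  have h2N : (0:ℝ) < 2 ^ N := by positivity
  have hcover : F i ⊆ ⋃ x ∈ Finset.image (fun k : ℕ => (k : ℝ) / 2 ^ N) (goodK i N),
      Metric.closedBall x ((2:ℝ)⁻¹ ^ N) := by
    intro x hx
    obtain ⟨k, hk, hxk⟩ := Set.mem_iUnion₂.mp (F_subset_cover i N hx)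
    refine Set.mem_biUnion (Finset.mem_coe.mpr (Finset.mem_image_of_mem _ hk)) ?_
    rw [Metric.mem_closedBall, Real.dist_eq, abs_le]
    obtain ⟨h1, h2⟩ := hxk
    have he : ((k:ℝ) + 1) / 2 ^ N = (k:ℝ) / 2 ^ N + (2:ℝ)⁻¹ ^ N := by
      rw [add_div, inv_pow]
      congr 1
      rw [one_div]
    have hpos : (0:ℝ) ≤ (2:ℝ)⁻¹ ^ N := by positivity
    constructor <;> [linarith; linarith [he ▸ h2]]
  calc covN (F i) ((2:ℝ)⁻¹ ^ N)
      ≤ ((Finset.image (fun k : ℕ => (k : ℝ) / 2 ^ N) (goodK i N)).card : ℕ∞) := by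
        rw [covN]
        exact iInf₂_le (Finset.image (fun k : ℕ => (k : ℝ) / 2 ^ N) (goodK i N)) hcover
  _ ≤ _ := by exact_mod_cast Finset.card_image_le

lemma ubox_F_eq_zero
    (szemeredi : ∀ A : Set ℕ, 0 < upperDensity A → ∀ k : ℕ, HasAP A k)
    {i : ℕ} (hi : 3 ≤ i) : ubox (F i) = 0 := by
  refine le_antisymm ?_ zero_le
  have main : ∀ δ : ℝ, 0 < δ → ubox (F i) ≤ ENNReal.ofReal δ := by
    intro δ hδ
    obtain ⟨N₀, hN₀⟩ := goodK_card_le_rpow szemeredi hi hδ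
    apply Filter.limsup_le_of_le (by isBoundedDefault)
    filter_upwards [Filter.eventually_ge_atTop (max N₀ 1)] with N hN
    have hN1 : 1 ≤ N := le_trans (le_max_right _ _) hN
    have hNN₀ : N₀ ≤ N := le_trans (le_max_left _ _) hN
    have hcov := covN_le_card i N
    have hne : covN (F i) ((2:ℝ)⁻¹ ^ N) ≠ ⊤ :=
      (lt_of_le_of_lt hcov (WithTop.coe_lt_top _)).ne
    rw [if_neg hne]
    apply ENNReal.ofReal_le_ofReal
    have htn : ((covN (F i) ((2:ℝ)⁻¹ ^ N)).toNat) ≤ (goodK i N).card := by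
      obtain ⟨n, hn⟩ := WithTop.ne_top_iff_exists.mp hne
      rw [← hn] at hcov ⊢
      change n ≤ _
      exact WithTop.coe_le_coe.mp hcov
    rcases Nat.eq_zero_or_pos ((covN (F i) ((2:ℝ)⁻¹ ^ N)).toNat) with h0 | hpos
    · rw [h0]
      simp only [Nat.cast_zero, Real.logb_zero, zero_div]
      exact hδ.le
    · have hNpos : (0:ℝ) < N := by exact_mod_cast hN1
      rw [div_le_iff₀ hNpos]
      have hcard := hN₀ N hNN₀
      calc Real.logb 2 ((covN (F i) ((2:ℝ)⁻¹ ^ N)).toNat)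
          ≤ Real.logb 2 ((2:ℝ) ^ (δ * N)) := by
            apply Real.logb_le_logb_of_le (by norm_num : (1:ℝ) < 2)
              (by exact_mod_cast hpos)
            calc ((covN (F i) ((2:ℝ)⁻¹ ^ N)).toNat : ℝ) ≤ ((goodK i N).card : ℝ) := by
                  exact_mod_cast htn
            _ ≤ (2:ℝ) ^ (δ * N) := hcard
      _ = δ * N := Real.logb_rpow two_pos (by norm_num)
  apply ENNReal.le_of_forall_pos_le_add
  intro ε hε _
  rw [zero_add]
  calc ubox (F i) ≤ ENNReal.ofReal (ε : ℝ) := main ε (by exact_mod_cast hε)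
  _ ≤ (ε : ℝ≥0∞) := by
      rw [ENNReal.ofReal_coe_nnreal]
open scoped Topology
lemma dimH_F_eq_zero
    (szemeredi : ∀ A : Set ℕ, 0 < upperDensity A → ∀ k : ℕ, HasAP A k)
    {i : ℕ} (hi : 3 ≤ i) : dimH (F i) = 0 := by
  refine le_antisymm (dimH_le fun d' hd' => ?_) zero_le
  by_contra hne
  have hd0 : (0:ℝ) < (d' : ℝ) := by
    rcases eq_or_lt_of_le (zero_le : 0 ≤ d') with h | h
    · exact absurd (by rw [← h]; rfl : ((d' : ℝ≥0∞)) ≤ 0) hne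
    · exact_mod_cast h
  set d : ℝ := (d' : ℝ) with hd
  -- the Hausdorff measure at d is 0
  have hzero : μH[d] (F i) = 0 := by
    obtain ⟨N₀, hN₀⟩ := goodK_card_le_rpow szemeredi hi (half_pos hd0)
    have hr0 : Filter.Tendsto (fun N : ℕ => ENNReal.ofReal ((2:ℝ)⁻¹ ^ N)) atTop (𝓝 0) := by
      rw [← ENNReal.ofReal_zero]
      exact (ENNReal.continuous_ofReal.tendsto 0).comp
        (tendsto_pow_atTop_nhds_zero_of_lt_one (by norm_num) (by norm_num))
    have hμ := MeasureTheory.Measure.hausdorffMeasure_le_liminf_sum d (F i)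
      (fun N : ℕ => ENNReal.ofReal ((2:ℝ)⁻¹ ^ N)) hr0
      (fun N (k : {k // k ∈ goodK i N}) =>
        Set.Icc (((k:ℕ) : ℝ) / 2 ^ N) ((((k:ℕ) : ℝ) + 1) / 2 ^ N))
      ?_ ?_
    · refine le_antisymm (le_trans hμ ?_) zero_le
      have ht : Filter.Tendsto (fun N : ℕ => ∑ k : {k // k ∈ goodK i N},
          Metric.ediam (Set.Icc (((k:ℕ) : ℝ) / 2 ^ N) ((((k:ℕ) : ℝ) + 1) / 2 ^ N)) ^ d)
          atTop (𝓝 0) := by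
        have hub : ∀ᶠ N : ℕ in atTop, ∑ k : {k // k ∈ goodK i N},
            Metric.ediam (Set.Icc (((k:ℕ) : ℝ) / 2 ^ N) ((((k:ℕ) : ℝ) + 1) / 2 ^ N)) ^ d
            ≤ ENNReal.ofReal (((2:ℝ) ^ (-(d/2))) ^ N) := by
          filter_upwards [Filter.eventually_ge_atTop N₀] with N hNN₀
          have h2N : (0:ℝ) < 2 ^ N := by positivity
          have hdiam : ∀ k : {k // k ∈ goodK i N},
              Metric.ediam (Set.Icc (((k:ℕ) : ℝ) / 2 ^ N) ((((k:ℕ) : ℝ) + 1) / 2 ^ N))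
              = ENNReal.ofReal ((2:ℝ)⁻¹ ^ N) := by
            intro k
            rw [Real.ediam_Icc]
            congr 1
            rw [inv_pow]
            field_simp; ring
          simp only [hdiam]
          rw [Finset.sum_const, Finset.card_univ, Fintype.card_coe]
          -- (card) • x ≤ bound
          have hcard := hN₀ N hNN₀
          have hle1 : ((goodK i N).card : ℝ≥0∞) ≤ ENNReal.ofReal ((2:ℝ) ^ ((d/2) * N)) := by
            rw [← ENNReal.ofReal_natCast]
            exact ENNReal.ofReal_le_ofReal hcard
          have hle2 : (ENNReal.ofReal ((2:ℝ)⁻¹ ^ N)) ^ d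
              = ENNReal.ofReal (((2:ℝ)⁻¹ ^ N) ^ d) := by
            rw [← ENNReal.ofReal_rpow_of_pos (by positivity)]
          rw [nsmul_eq_mul, hle2]
          calc ((goodK i N).card : ℝ≥0∞) * ENNReal.ofReal (((2:ℝ)⁻¹ ^ N) ^ d)
              ≤ ENNReal.ofReal ((2:ℝ) ^ ((d/2) * N)) * ENNReal.ofReal (((2:ℝ)⁻¹ ^ N) ^ d) :=
                mul_le_mul_left hle1 _
          _ = ENNReal.ofReal ((2:ℝ) ^ ((d/2) * N) * ((2:ℝ)⁻¹ ^ N) ^ d) :=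
                (ENNReal.ofReal_mul (by positivity)).symm
          _ = ENNReal.ofReal (((2:ℝ) ^ (-(d/2))) ^ N) := by
                congr 1
                have e1 : ((2:ℝ)⁻¹ ^ N) = (2:ℝ) ^ (-(N:ℝ)) := by
                  rw [inv_pow, ← Real.rpow_natCast 2 N, ← Real.rpow_neg (by norm_num)]
                rw [e1, ← Real.rpow_natCast ((2:ℝ) ^ (-(d/2))) N,
                  ← Real.rpow_mul (by norm_num), ← Real.rpow_mul (by norm_num),
                  ← Real.rpow_add (by norm_num)]
                congr 1
                ring
        have hlim : Filter.Tendsto (fun N : ℕ => ENNReal.ofReal (((2:ℝ) ^ (-(d/2))) ^ N))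
            atTop (𝓝 0) := by
          rw [← ENNReal.ofReal_zero]
          apply (ENNReal.continuous_ofReal.tendsto 0).comp
          apply tendsto_pow_atTop_nhds_zero_of_lt_one
          · positivity
          · exact Real.rpow_lt_one_of_one_lt_of_neg (by norm_num) (by linarith)
        exact tendsto_of_tendsto_of_tendsto_of_le_of_le' tendsto_const_nhds hlim
          (Filter.Eventually.of_forall fun _ => zero_le) hub
      rw [ht.liminf_eq]
    · filter_upwards with N
      intro k
      rw [Real.ediam_Icc]
      apply ENNReal.ofReal_le_ofReal
      have h2N : (0:ℝ) < 2 ^ N := by positivity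
      rw [inv_pow]
      rw [div_sub_div_same]
      ring_nf
      simp
    · filter_upwards with N
      intro x hx
      obtain ⟨k, hk, hxk⟩ := Set.mem_iUnion₂.mp (F_subset_cover i N hx)
      exact Set.mem_iUnion.mpr ⟨⟨k, hk⟩, hxk⟩
  rw [hd] at hzero
  rw [show μH[(d' : ℝ)] (F i) = μH[d] (F i) from rfl, hzero] at hd'
  exact ENNReal.zero_ne_top hd'
theorem stmt10
    (szemeredi : ∀ A : Set ℕ, 0 < upperDensity A → ∀ k : ℕ, HasAP A k) :
    (∀ i : ℕ, 3 ≤ i → ubox (F i) = 0) ∧ dimH E = 0 := by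
  constructor
  · intro i hi
    exact ubox_F_eq_zero szemeredi hi
  · have hE : dimH (⋃ i, ⋃ (_ : 3 ≤ i), F i) = 0 := by
      rw [dimH_iUnion]
      refine le_antisymm (iSup_le fun i => ?_) zero_le
      rw [dimH_iUnion]
      exact iSup_le fun hi => le_of_eq (dimH_F_eq_zero szemeredi hi)
    exact hE
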